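/- arXiv:1710.09026 — 3 statements merged into one kernel-verified Lean document; each statement's English description precedes it below -/
import Mathlib

section
/- Let W be an m × n real matrix and let σ₁(W), …, σ_{min(m,n)}(W) denote its singular values (the nonnegative square roots of the eigenvalues of WᵀW). Then the trace norm ‖W‖_T := Σ_{i=1}^{min(m,n)} σ_i(W) satisfies ‖W‖_T = min over all factorizations W = U·V with U of size m × min(m,n) and V of size min(m,n) × n of (1/2)(‖U‖_F² + ‖V‖_F²), where ‖·‖_F denotes the Frobenius norm. -/
open Matrix BigOperators

/-- The Frobenius norm of a real matrix. -/
noncomputable def frobeniusNorm {m n : ℕ} (A : Matrix (Fin m) (Fin n) ℝ) : ℝ :=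
  Real.sqrt (∑ i, ∑ j, (A i j) ^ 2)

/-- The full list of `n` singular values of an `m × n` real matrix `W`, namely the
nonnegative square roots of the eigenvalues of `Wᵀ * W`. (At most `min m n` of these
are nonzero.) -/
noncomputable def singularValuesFull {m n : ℕ} (W : Matrix (Fin m) (Fin n) ℝ) :
    Fin n → ℝ :=
  fun i => Real.sqrt ((Matrix.isHermitian_conjTranspose_mul_self W).eigenvalues i)

/-- The trace norm (nuclear norm) of a real matrix: the sum of its singular values. -/
noncomputable def traceNorm {m n : ℕ} (W : Matrix (Fin m) (Fin n) ℝ) : ℝ :=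
  ∑ i, singularValuesFull W i

/-- `σ : Fin (min m n) → ℝ` is "the vector of singular values" of `W` when its entries
are nonnegative and, after padding with `n - min m n` zeros, it agrees (as a multiset)
with the nonnegative square roots of the eigenvalues of `Wᵀ * W`. -/
def IsSingularValueVector {m n : ℕ} (W : Matrix (Fin m) (Fin n) ℝ)
    (σ : Fin (min m n) → ℝ) : Prop :=
  (∀ i, 0 ≤ σ i) ∧
    Multiset.map σ Finset.univ.val + Multiset.replicate (n - min m n) 0
      = Multiset.map (singularValuesFull W) Finset.univ.val

namespace TN

/-- sum of a `dite` over a larger `Fin` equals sum over the smaller `Fin`. -/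
lemma sum_dite_lt {M c : ℕ} (hc : c ≤ M) (G : Fin c → ℝ) :
    ∑ k : Fin M, (if h : (k : ℕ) < c then G ⟨k, h⟩ else 0) = ∑ j : Fin c, G j := by
  set F : ℕ → ℝ := fun k => if h : k < c then G ⟨k, h⟩ else 0 with hF
  have h1 : ∑ k : Fin M, (if h : (k : ℕ) < c then G ⟨k, h⟩ else 0) = ∑ k ∈ Finset.range M, F k :=
    Fin.sum_univ_eq_sum_range F M
  have h2 : ∑ j : Fin c, G j = ∑ k ∈ Finset.range c, F k := by
    rw [← Fin.sum_univ_eq_sum_range F c]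
    refine Finset.sum_congr rfl fun j _ => ?_
    simp [hF, j.2]
  rw [h1, h2]
  refine (Finset.sum_subset (Finset.range_subset_range.mpr hc) ?_).symm
  intro k _ hk
  simp only [Finset.mem_range, not_lt] at hk
  simp [hF, Nat.not_lt.mpr hk]

/-- sum over `Fin s.card` through `orderIsoOfFin` equals sum over `s`. -/
lemma sum_orderIso {α : Type*} [LinearOrder α] (s : Finset α) (g : α → ℝ) :
    ∑ j : Fin s.card, g ((s.orderIsoOfFin rfl j : α)) = ∑ i ∈ s, g i := by
  rw [← Finset.sum_coe_sort s g]
  exact Fintype.sum_equiv (s.orderIsoOfFin rfl).toEquiv _ _ (fun j => rfl)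

lemma sum_dp {ι : Type*} (s : Finset ι) {N : ℕ} (f : ι → Fin N → ℝ) (c : Fin N → ℝ) :
    (∑ i ∈ s, f i) ⬝ᵥ c = ∑ i ∈ s, f i ⬝ᵥ c := by
  simp only [dotProduct, Finset.sum_apply, Finset.sum_mul]
  exact Finset.sum_comm

lemma dp_sum {ι : Type*} (s : Finset ι) {N : ℕ} (f : ι → Fin N → ℝ) (c : Fin N → ℝ) :
    c ⬝ᵥ (∑ i ∈ s, f i) = ∑ i ∈ s, c ⬝ᵥ f i := by
  rw [dotProduct_comm, sum_dp]
  simp_rw [dotProduct_comm]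

lemma dp_le {N : ℕ} (x y : Fin N → ℝ) : x ⬝ᵥ y ≤ ((x ⬝ᵥ x) + (y ⬝ᵥ y)) / 2 := by
  have key : (0:ℝ) ≤ (x - y) ⬝ᵥ (x - y) := by
    unfold dotProduct
    exact Finset.sum_nonneg fun a _ => mul_self_nonneg _
  rw [sub_dotProduct, dotProduct_sub, dotProduct_sub] at key
  rw [dotProduct_comm y x] at key
  linarith

lemma bessel {ι : Type*} [DecidableEq ι] (s : Finset ι) {N : ℕ} (u : ι → Fin N → ℝ)
    (h : ∀ i ∈ s, ∀ j ∈ s, u i ⬝ᵥ u j = if i = j then 1 else 0) (c : Fin N → ℝ) :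
    ∑ i ∈ s, (u i ⬝ᵥ c) ^ 2 ≤ c ⬝ᵥ c := by
  set t : ι → ℝ := fun i => u i ⬝ᵥ c with ht
  set r : Fin N → ℝ := c - ∑ i ∈ s, t i • u i with hr
  have key : (0:ℝ) ≤ r ⬝ᵥ r := by
    unfold dotProduct
    exact Finset.sum_nonneg fun a _ => mul_self_nonneg _
  have e1 : (∑ i ∈ s, t i • u i) ⬝ᵥ c = ∑ i ∈ s, t i ^ 2 := by
    rw [sum_dp]
    refine Finset.sum_congr rfl fun i hi => ?_
    rw [smul_dotProduct]
    show t i • t i = _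
    simp [sq, smul_eq_mul]
  have e2 : c ⬝ᵥ (∑ i ∈ s, t i • u i) = ∑ i ∈ s, t i ^ 2 := by
    rw [dotProduct_comm]; exact e1
  have e3 : (∑ i ∈ s, t i • u i) ⬝ᵥ (∑ j ∈ s, t j • u j) = ∑ i ∈ s, t i ^ 2 := by
    rw [sum_dp]
    refine Finset.sum_congr rfl fun i hi => ?_
    rw [smul_dotProduct, dp_sum]
    have : ∀ j ∈ s, u i ⬝ᵥ t j • u j = if i = j then t i else 0 := by
      intro j hj
      rw [dotProduct_smul, h i hi j hj]
      by_cases hij : i = j <;> simp [hij]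
    rw [Finset.sum_congr rfl this, Finset.sum_ite_eq s i (fun _ => t i), if_pos hi]
    simp [sq, smul_eq_mul, mul_comm]
  have expand : r ⬝ᵥ r = c ⬝ᵥ c - ∑ i ∈ s, t i ^ 2 := by
    rw [hr, sub_dotProduct, dotProduct_sub, dotProduct_sub, e2, e3, e1]
    ring
  rw [expand] at key
  linarith

variable {m n : ℕ} (W : Matrix (Fin m) (Fin n) ℝ)

noncomputable def ev : Fin n → ℝ := (Matrix.isHermitian_conjTranspose_mul_self W).eigenvalues
noncomputable def q (i : Fin n) : Fin n → ℝ :=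
  ⇑((Matrix.isHermitian_conjTranspose_mul_self W).eigenvectorBasis i)

lemma ev_nonneg (i : Fin n) : 0 ≤ ev W i :=
  Matrix.eigenvalues_conjTranspose_mul_self_nonneg W i

lemma dot_q (i j : Fin n) : q W i ⬝ᵥ q W j = if i = j then 1 else 0 := by
  have h := ((Matrix.isHermitian_conjTranspose_mul_self W).eigenvectorBasis).orthonormal
  rw [orthonormal_iff_ite] at h
  rw [← h i j]
  simp [PiLp.inner_apply, dotProduct, q, mul_comm]

lemma complete (a b : Fin n) : ∑ j, q W j a * q W j b = if a = b then 1 else 0 := by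
  have h2 := Matrix.mem_unitaryGroup_iff.mp
    ((Matrix.isHermitian_conjTranspose_mul_self W).eigenvectorUnitary).2
  have := congrFun (congrFun (congrArg (fun M => M) h2) a) b
  simp only [Matrix.mul_apply, Matrix.one_apply, Matrix.star_apply, star_trivial,
    Matrix.IsHermitian.eigenvectorUnitary_apply] at this
  convert this using 2
  rfl

lemma dot_WmulVec (x y : Fin n → ℝ) : (W *ᵥ x) ⬝ᵥ (W *ᵥ y) = x ⬝ᵥ ((Wᴴ * W) *ᵥ y) := by
  rw [dotProduct_mulVec, dotProduct_mulVec, ← vecMul_vecMul, vecMul_conjTranspose]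
  simp

lemma Wq_dot (i j : Fin n) :
    (W *ᵥ q W i) ⬝ᵥ (W *ᵥ q W j) = ev W j * (if i = j then 1 else 0) := by
  rw [dot_WmulVec]
  unfold q ev
  rw [(Matrix.isHermitian_conjTranspose_mul_self W).mulVec_eigenvectorBasis j]
  rw [dotProduct_smul]
  have := dot_q W i j
  unfold q at this
  rw [this]
  simp [mul_comm]

lemma Wq_zero {i : Fin n} (h : ev W i = 0) : W *ᵥ q W i = 0 := by
  have h1 := Wq_dot W i i
  rw [h] at h1
  simp at h1
  exact h1

lemma decomp (a : Fin m) (b : Fin n) : W a b = ∑ i, (W *ᵥ q W i) a * q W i b := by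
  have h1 : ∀ i, (W *ᵥ q W i) a = ∑ c, W a c * q W i c := fun i => rfl
  calc W a b = ∑ c, W a c * (if c = b then 1 else 0) := by simp
    _ = ∑ c, W a c * ∑ i, q W i c * q W i b := by
        refine Finset.sum_congr rfl fun c _ => ?_; rw [complete]
    _ = ∑ c, ∑ i, W a c * (q W i c * q W i b) := by simp_rw [Finset.mul_sum]
    _ = ∑ i, ∑ c, W a c * (q W i c * q W i b) := Finset.sum_comm
    _ = ∑ i, (W *ᵥ q W i) a * q W i b := by
        refine Finset.sum_congr rfl fun i _ => ?_
        rw [h1, Finset.sum_mul]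
        refine Finset.sum_congr rfl fun c _ => by ring

noncomputable def S : Finset (Fin n) := Finset.univ.filter (fun i => ev W i ≠ 0)

lemma card_S_le : (S W).card ≤ min m n := by
  classical
  have h1 : Fintype.card {i // ev W i ≠ 0} = (Wᴴ * W).rank :=
    ((Matrix.isHermitian_conjTranspose_mul_self W).rank_eq_card_non_zero_eigs).symm
  rw [S, ← Fintype.card_subtype, h1, Matrix.rank_conjTranspose_mul_self]
  exact le_min (Matrix.rank_le_height W) (Matrix.rank_le_width W)

lemma sum_S (g : Fin n → ℝ) (hg : ∀ i, ev W i = 0 → g i = 0) :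
    ∑ i ∈ S W, g i = ∑ i, g i := by
  refine Finset.sum_subset (Finset.subset_univ _) fun i _ hi => ?_
  simp only [S, Finset.mem_filter, Finset.mem_univ, true_and, not_not] at hi
  exact hg i hi

lemma traceNorm_eq : traceNorm W = ∑ i ∈ S W, Real.sqrt (ev W i) := by
  rw [sum_S W _ (fun i h => by rw [h, Real.sqrt_zero])]
  rfl

end TN

namespace TN

lemma frob_sq {m n : ℕ} (A : Matrix (Fin m) (Fin n) ℝ) :
    frobeniusNorm A ^ 2 = ∑ i, ∑ j, (A i j) ^ 2 :=
  Real.sq_sqrt (Finset.sum_nonneg fun _ _ => Finset.sum_nonneg fun _ _ => sq_nonneg _)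

variable {m n : ℕ} (W : Matrix (Fin m) (Fin n) ℝ)

noncomputable def r (i : Fin n) : ℝ := Real.sqrt (Real.sqrt (ev W i))

lemma ev_pos {i : Fin n} (hi : i ∈ S W) : 0 < ev W i := by
  simp only [S, Finset.mem_filter] at hi
  exact lt_of_le_of_ne (ev_nonneg W i) (Ne.symm hi.2)

lemma r_pos {i : Fin n} (hi : i ∈ S W) : 0 < r W i := by
  unfold r
  exact Real.sqrt_pos.mpr (Real.sqrt_pos.mpr (ev_pos W hi))

lemma r_sq {i : Fin n} : r W i ^ 2 = Real.sqrt (ev W i) := by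
  unfold r
  exact Real.sq_sqrt (Real.sqrt_nonneg _)

lemma Wq_norm (i : Fin n) : (W *ᵥ q W i) ⬝ᵥ (W *ᵥ q W i) = ev W i := by
  rw [Wq_dot]; simp

lemma q_norm (i : Fin n) : q W i ⬝ᵥ q W i = 1 := by
  rw [dot_q]; simp

lemma mem_part : ∃ (U : Matrix (Fin m) (Fin (min m n)) ℝ)
    (V : Matrix (Fin (min m n)) (Fin n) ℝ), W = U * V ∧
    traceNorm W = (1 / 2) * (frobeniusNorm U ^ 2 + frobeniusNorm V ^ 2) := by
  classical
  set c := (S W).card with hcdef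
  have hc : c ≤ min m n := card_S_le W
  set idx : Fin c → Fin n := fun j => ((S W).orderIsoOfFin rfl j : Fin n) with hidx
  have idx_mem : ∀ j, idx j ∈ S W := fun j => ((S W).orderIsoOfFin rfl j).2
  have hsum : ∀ g : Fin n → ℝ,
      (∑ k : Fin (min m n), if h : (k : ℕ) < c then g (idx ⟨k, h⟩) else 0)
        = ∑ i ∈ S W, g i :=
    fun g => (sum_dite_lt hc (fun j => g (idx j))).trans (sum_orderIso (S W) g)
  set U : Matrix (Fin m) (Fin (min m n)) ℝ := fun a k =>
    if h : (k : ℕ) < c then (W *ᵥ q W (idx ⟨k, h⟩)) a / r W (idx ⟨k, h⟩) else 0 with hU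
  set V : Matrix (Fin (min m n)) (Fin n) ℝ := fun k b =>
    if h : (k : ℕ) < c then r W (idx ⟨k, h⟩) * q W (idx ⟨k, h⟩) b else 0 with hV
  refine ⟨U, V, ?_, ?_⟩
  · ext a b
    rw [Matrix.mul_apply]
    have term : ∀ k : Fin (min m n), U a k * V k b =
        if h : (k : ℕ) < c then
          (fun i => (W *ᵥ q W i) a * q W i b) (idx ⟨k, h⟩) else 0 := by
      intro k
      by_cases h : (k : ℕ) < c
      · simp only [hU, hV, dif_pos h]
        have hr := (r_pos W (idx_mem ⟨k, h⟩)).ne'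
        field_simp
      · simp [hU, hV, dif_neg h]
    calc W a b = ∑ i, (W *ᵥ q W i) a * q W i b := decomp W a b
      _ = ∑ i ∈ S W, (W *ᵥ q W i) a * q W i b :=
          (sum_S W _ (fun i h => by rw [Wq_zero W h]; simp)).symm
      _ = ∑ k : Fin (min m n), (if h : (k : ℕ) < c then
            (fun i => (W *ᵥ q W i) a * q W i b) (idx ⟨k, h⟩) else 0) :=
          (hsum (fun i => (W *ᵥ q W i) a * q W i b)).symm
      _ = ∑ k : Fin (min m n), U a k * V k b :=
          Finset.sum_congr rfl fun k _ => (term k).symm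
  · have hUF : frobeniusNorm U ^ 2 = traceNorm W := by
      rw [frob_sq, Finset.sum_comm]
      have term : ∀ k : Fin (min m n), ∑ a, U a k ^ 2 =
          if h : (k : ℕ) < c then (fun i => Real.sqrt (ev W i)) (idx ⟨k, h⟩) else 0 := by
        intro k
        by_cases h : (k : ℕ) < c
        · simp only [hU, dif_pos h]
          have hstep : ∀ a : Fin m, ((W *ᵥ q W (idx ⟨k, h⟩)) a / r W (idx ⟨k, h⟩)) ^ 2
              = (W *ᵥ q W (idx ⟨k, h⟩)) a * (W *ᵥ q W (idx ⟨k, h⟩)) a / r W (idx ⟨k, h⟩) ^ 2 := by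
            intro a; rw [div_pow]; ring_nf
          rw [Finset.sum_congr rfl fun a _ => hstep a, ← Finset.sum_div]
          rw [show ∑ a, (W *ᵥ q W (idx ⟨k, h⟩)) a * (W *ᵥ q W (idx ⟨k, h⟩)) a
              = (W *ᵥ q W (idx ⟨k, h⟩)) ⬝ᵥ (W *ᵥ q W (idx ⟨k, h⟩)) from rfl]
          rw [Wq_norm, r_sq]
          exact Real.div_sqrt
        · simp [hU, dif_neg h]
      calc ∑ k : Fin (min m n), ∑ a, U a k ^ 2
          = ∑ k : Fin (min m n), (if h : (k : ℕ) < c then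
              (fun i => Real.sqrt (ev W i)) (idx ⟨k, h⟩) else 0) :=
            Finset.sum_congr rfl fun k _ => term k
        _ = ∑ i ∈ S W, Real.sqrt (ev W i) := hsum (fun i => Real.sqrt (ev W i))
        _ = traceNorm W := (traceNorm_eq W).symm
    have hVF : frobeniusNorm V ^ 2 = traceNorm W := by
      rw [frob_sq]
      have term : ∀ k : Fin (min m n), ∑ b, V k b ^ 2 =
          if h : (k : ℕ) < c then (fun i => Real.sqrt (ev W i)) (idx ⟨k, h⟩) else 0 := by
        intro k
        by_cases h : (k : ℕ) < c
        · simp only [hV, dif_pos h]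
          have hstep : ∀ b : Fin n, (r W (idx ⟨k, h⟩) * q W (idx ⟨k, h⟩) b) ^ 2
              = r W (idx ⟨k, h⟩) ^ 2 * (q W (idx ⟨k, h⟩) b * q W (idx ⟨k, h⟩) b) := by
            intro b; ring
          rw [Finset.sum_congr rfl fun b _ => hstep b, ← Finset.mul_sum]
          rw [show ∑ b, q W (idx ⟨k, h⟩) b * q W (idx ⟨k, h⟩) b
              = q W (idx ⟨k, h⟩) ⬝ᵥ q W (idx ⟨k, h⟩) from rfl]
          rw [q_norm, r_sq, mul_one]
        · simp [hV, dif_neg h]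
      calc ∑ k : Fin (min m n), ∑ b, V k b ^ 2
          = ∑ k : Fin (min m n), (if h : (k : ℕ) < c then
              (fun i => Real.sqrt (ev W i)) (idx ⟨k, h⟩) else 0) :=
            Finset.sum_congr rfl fun k _ => term k
        _ = ∑ i ∈ S W, Real.sqrt (ev W i) := hsum (fun i => Real.sqrt (ev W i))
        _ = traceNorm W := (traceNorm_eq W).symm
    rw [hUF, hVF]
    ring


lemma dp_self_nonneg {N : ℕ} (x : Fin N → ℝ) : 0 ≤ x ⬝ᵥ x := by
  unfold dotProduct
  exact Finset.sum_nonneg fun a _ => mul_self_nonneg _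

lemma parseval (x : Fin n → ℝ) : ∑ i, (x ⬝ᵥ q W i) ^ 2 = ∑ b, x b ^ 2 := by
  have e1 : ∀ i : Fin n, (x ⬝ᵥ q W i) ^ 2 = ∑ b, ∑ c, (x b * q W i b) * (x c * q W i c) := by
    intro i
    rw [sq]
    exact Finset.sum_mul_sum _ _ _ _
  rw [Finset.sum_congr rfl fun i _ => e1 i, Finset.sum_comm]
  have e2 : ∀ b : Fin n, ∑ i, ∑ c, (x b * q W i b) * (x c * q W i c) = x b ^ 2 := by
    intro b
    rw [Finset.sum_comm]
    have e3 : ∀ c : Fin n, ∑ i, (x b * q W i b) * (x c * q W i c)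
        = (x b * x c) * (if b = c then 1 else 0) := by
      intro c
      rw [← complete W b c, Finset.mul_sum]
      refine Finset.sum_congr rfl fun i _ => by ring
    rw [Finset.sum_congr rfl fun c _ => e3 c]
    simp [sq]
  rw [Finset.sum_congr rfl fun b _ => e2 b]

lemma lower_bound (U : Matrix (Fin m) (Fin (min m n)) ℝ) (V : Matrix (Fin (min m n)) (Fin n) ℝ)
    (hW : W = U * V) :
    traceNorm W ≤ (1 / 2) * (frobeniusNorm U ^ 2 + frobeniusNorm V ^ 2) := by
  classical
  set σ : Fin n → ℝ := fun i => Real.sqrt (ev W i) with hσ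
  set u : Fin n → Fin m → ℝ := fun i a => (W *ᵥ q W i) a / σ i with hu
  have hσ_pos : ∀ i ∈ S W, 0 < σ i := fun i hi => Real.sqrt_pos.mpr (ev_pos W hi)
  have hσ_sq : ∀ i : Fin n, σ i ^ 2 = ev W i := fun i => Real.sq_sqrt (ev_nonneg W i)
  have hdot : ∀ i j : Fin n, u i ⬝ᵥ u j
      = ((W *ᵥ q W i) ⬝ᵥ (W *ᵥ q W j)) / (σ i * σ j) := by
    intro i j
    unfold dotProduct
    rw [Finset.sum_div]
    refine Finset.sum_congr rfl fun a _ => ?_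
    simp only [hu]
    rw [div_mul_div_comm]
  have h_ortho : ∀ i ∈ S W, ∀ j ∈ S W, u i ⬝ᵥ u j = if i = j then 1 else 0 := by
    intro i hi j hj
    rw [hdot, Wq_dot]
    by_cases hij : i = j
    · subst hij
      simp only [eq_self_iff_true, if_true]
      rw [mul_one, ← hσ_sq i, sq]
      exact div_self (ne_of_gt (mul_pos (hσ_pos i hi) (hσ_pos i hi)))
    · simp only [if_neg hij]
      rw [mul_zero, zero_div]
  have key : ∀ i ∈ S W, σ i ≤ ((vecMul (u i) U) ⬝ᵥ (vecMul (u i) U)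
      + (V *ᵥ q W i) ⬝ᵥ (V *ᵥ q W i)) / 2 := by
    intro i hi
    have e0 : u i ⬝ᵥ (W *ᵥ q W i) = σ i := by
      have : u i ⬝ᵥ (W *ᵥ q W i) = ((W *ᵥ q W i) ⬝ᵥ (W *ᵥ q W i)) / σ i := by
        unfold dotProduct
        rw [Finset.sum_div]
        refine Finset.sum_congr rfl fun a _ => ?_
        simp only [hu]
        rw [div_mul_eq_mul_div]
      rw [this, Wq_norm, hσ]
      exact Real.div_sqrt
    have h1 : σ i = (vecMul (u i) U) ⬝ᵥ (V *ᵥ q W i) := by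
      calc σ i = u i ⬝ᵥ (W *ᵥ q W i) := e0.symm
        _ = u i ⬝ᵥ ((U * V) *ᵥ q W i) := by rw [← hW]
        _ = u i ⬝ᵥ (U *ᵥ (V *ᵥ q W i)) := by rw [← Matrix.mulVec_mulVec]
        _ = (vecMul (u i) U) ⬝ᵥ (V *ᵥ q W i) := dotProduct_mulVec _ _ _
    rw [h1]
    exact dp_le _ _
  have sumU : ∑ i ∈ S W, (vecMul (u i) U) ⬝ᵥ (vecMul (u i) U) ≤ frobeniusNorm U ^ 2 := by
    have expand : ∀ i : Fin n, (vecMul (u i) U) ⬝ᵥ (vecMul (u i) U)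
        = ∑ k, (u i ⬝ᵥ (fun a => U a k)) ^ 2 := by
      intro i
      simp [vecMul, dotProduct, sq]
    calc ∑ i ∈ S W, (vecMul (u i) U) ⬝ᵥ (vecMul (u i) U)
        = ∑ i ∈ S W, ∑ k, (u i ⬝ᵥ (fun a => U a k)) ^ 2 :=
          Finset.sum_congr rfl fun i _ => expand i
      _ = ∑ k, ∑ i ∈ S W, (u i ⬝ᵥ (fun a => U a k)) ^ 2 := Finset.sum_comm
      _ ≤ ∑ k, ∑ a, U a k ^ 2 := by
          refine Finset.sum_le_sum fun k _ => ?_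
          calc ∑ i ∈ S W, (u i ⬝ᵥ fun a => U a k) ^ 2
              ≤ (fun a => U a k) ⬝ᵥ (fun a => U a k) := bessel (S W) u h_ortho _
            _ = ∑ a, U a k ^ 2 := by simp [dotProduct, sq]
      _ = ∑ a, ∑ k, U a k ^ 2 := Finset.sum_comm
      _ = frobeniusNorm U ^ 2 := (frob_sq U).symm
  have sumV : ∑ i ∈ S W, (V *ᵥ q W i) ⬝ᵥ (V *ᵥ q W i) ≤ frobeniusNorm V ^ 2 := by
    have step1 : ∑ i ∈ S W, (V *ᵥ q W i) ⬝ᵥ (V *ᵥ q W i)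
        ≤ ∑ i : Fin n, (V *ᵥ q W i) ⬝ᵥ (V *ᵥ q W i) :=
      Finset.sum_le_sum_of_subset_of_nonneg (Finset.subset_univ _)
        (fun i _ _ => dp_self_nonneg _)
    have step2 : ∑ i : Fin n, (V *ᵥ q W i) ⬝ᵥ (V *ᵥ q W i) = frobeniusNorm V ^ 2 := by
      rw [frob_sq]
      have e : ∀ i : Fin n, (V *ᵥ q W i) ⬝ᵥ (V *ᵥ q W i)
          = ∑ k, ((fun b => V k b) ⬝ᵥ q W i) ^ 2 := by
        intro i
        simp [mulVec, dotProduct, sq]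
      rw [Finset.sum_congr rfl fun i _ => e i, Finset.sum_comm]
      exact Finset.sum_congr rfl fun k _ => parseval W (fun b => V k b)
    linarith
  calc traceNorm W = ∑ i ∈ S W, σ i := traceNorm_eq W
    _ ≤ ∑ i ∈ S W, ((vecMul (u i) U) ⬝ᵥ (vecMul (u i) U)
          + (V *ᵥ q W i) ⬝ᵥ (V *ᵥ q W i)) / 2 := Finset.sum_le_sum key
    _ = (1 / 2) * (∑ i ∈ S W, (vecMul (u i) U) ⬝ᵥ (vecMul (u i) U)
          + ∑ i ∈ S W, (V *ᵥ q W i) ⬝ᵥ (V *ᵥ q W i)) := by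
        rw [← Finset.sum_add_distrib]
        rw [Finset.mul_sum]
        refine Finset.sum_congr rfl fun i _ => by ring
    _ ≤ (1 / 2) * (frobeniusNorm U ^ 2 + frobeniusNorm V ^ 2) := by
        have := add_le_add sumU sumV
        linarith

end TN

theorem trace_norm_eq_min_factorization {m n : ℕ} (W : Matrix (Fin m) (Fin n) ℝ) :
    IsLeast {x : ℝ | ∃ (U : Matrix (Fin m) (Fin (min m n)) ℝ)
        (V : Matrix (Fin (min m n)) (Fin n) ℝ), W = U * V ∧
        x = (1 / 2) * (frobeniusNorm U ^ 2 + frobeniusNorm V ^ 2)}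
      (traceNorm W) := by
  constructor
  · obtain ⟨U, V, h1, h2⟩ := TN.mem_part W
    exact ⟨U, V, h1, h2⟩
  · rintro x ⟨U, V, hW, rfl⟩
    exact TN.lower_bound W U V hW
end

section
/- Let W be an m × n real matrix. For every factorization W = U·V, where U is an m × r matrix and V is an r × n matrix for some r, the trace norm satisfies ‖W‖_T ≤ (1/2)(‖U‖_F² + ‖V‖_F²). -/
open Matrix BigOperators

lemma trace_transpose_mul' {a b : ℕ} (A B : Matrix (Fin a) (Fin b) ℝ) :
    Matrix.trace (Aᵀ * B) = ∑ i, ∑ j, A i j * B i j := by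
  rw [Matrix.trace, Finset.sum_comm]
  simp [Matrix.diag, Matrix.mul_apply]

lemma fsq_eq_trace {a b : ℕ} (A : Matrix (Fin a) (Fin b) ℝ) :
    ∑ i, ∑ j, A i j ^ 2 = Matrix.trace (Aᵀ * A) := by
  rw [trace_transpose_mul']; simp [pow_two]

lemma trace_transpose_mul_self_nonneg {a b : ℕ} (A : Matrix (Fin a) (Fin b) ℝ) :
    0 ≤ Matrix.trace (Aᵀ * A) := by
  rw [← fsq_eq_trace]; positivity

lemma aux_trace_bound {m n r : ℕ} (W : Matrix (Fin m) (Fin n) ℝ)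
    (U : Matrix (Fin m) (Fin r) ℝ) (V : Matrix (Fin r) (Fin n) ℝ)
    (Q : Matrix (Fin n) (Fin n) ℝ) (lam μ : Fin n → ℝ)
    (hW : W = U * V) (hQ1' : Q * Qᵀ = 1)
    (hdiag : (W * Q)ᵀ * (W * Q) = Matrix.diagonal lam)
    (hlam0 : ∀ i, 0 ≤ lam i) (hμ : ∀ i, μ i = Real.sqrt (lam i)) :
    ∑ i, μ i ≤ (1 / 2) * (Matrix.trace (Uᵀ * U) + Matrix.trace (Vᵀ * V)) := by
  classical
  have hμsq : ∀ i, μ i * μ i = lam i := fun i => by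
    rw [hμ]; exact Real.mul_self_sqrt (hlam0 i)
  obtain ⟨D, hD⟩ : ∃ D, D = Matrix.diagonal (fun i => (μ i)⁻¹) := ⟨_, rfl⟩
  obtain ⟨Y, hY⟩ : ∃ Y, Y = W * Q * D := ⟨_, rfl⟩
  have hYT : Yᵀ = D * (W * Q)ᵀ := by
    rw [hY, Matrix.transpose_mul, hD, Matrix.diagonal_transpose]
  -- Yᵀ Y is a 0/1 diagonal
  have hYY : Yᵀ * Y = Matrix.diagonal (fun i => (μ i)⁻¹ * (lam i * (μ i)⁻¹)) := by
    rw [hYT, hY, Matrix.mul_assoc D, ← Matrix.mul_assoc ((W * Q)ᵀ), hdiag, hD,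
      Matrix.diagonal_mul_diagonal, Matrix.diagonal_mul_diagonal]
  have hYe : Y * Matrix.diagonal (fun i => (μ i)⁻¹ * (lam i * (μ i)⁻¹)) = Y := by
    ext k i
    rw [Matrix.mul_diagonal]
    by_cases h : lam i = 0
    · have hμ0 : μ i = 0 := by rw [hμ, h, Real.sqrt_zero]
      have hY0 : Y k i = 0 := by
        rw [hY, hD, Matrix.mul_diagonal, hμ0]
        simp
      rw [hY0, zero_mul]
    · have hμne : μ i ≠ 0 := fun h0 => h (by rw [← hμsq i, h0, mul_zero])
      have he1 : (μ i)⁻¹ * (lam i * (μ i)⁻¹) = 1 := by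
        rw [← hμsq i]; field_simp
      rw [he1, mul_one]
  obtain ⟨P, hP⟩ : ∃ P, P = Y * Yᵀ := ⟨_, rfl⟩
  have hPP : P * P = P := by
    rw [hP]
    calc Y * Yᵀ * (Y * Yᵀ) = Y * (Yᵀ * Y) * Yᵀ := by simp only [Matrix.mul_assoc]
      _ = Y * Yᵀ := by rw [hYY, hYe]
  have hPT : Pᵀ = P := by
    rw [hP, Matrix.transpose_mul, Matrix.transpose_transpose]
  -- step A : ∑ μ = trace (Yᵀ * (W*Q))
  have hμlam : ∀ i, (μ i)⁻¹ * lam i = μ i := by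
    intro i
    rcases eq_or_ne (μ i) 0 with h0 | hne
    · have : lam i = 0 := by rw [← hμsq i, h0, mul_zero]
      simp [h0, this]
    · rw [← hμsq i]; field_simp
  have hstepA : ∑ i, μ i = Matrix.trace (Yᵀ * (W * Q)) := by
    rw [hYT, Matrix.mul_assoc, hdiag, hD, Matrix.diagonal_mul_diagonal,
      Matrix.trace_diagonal]
    exact Finset.sum_congr rfl fun i _ => (hμlam i).symm
  -- the two factors
  have hmain : Matrix.trace (Yᵀ * (W * Q)) = Matrix.trace ((Uᵀ * Y)ᵀ * (V * Q)) := by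
    congr 1
    rw [Matrix.transpose_mul, Matrix.transpose_transpose, hW]
    simp only [Matrix.mul_assoc]
  have hineq : Matrix.trace ((Uᵀ * Y)ᵀ * (V * Q)) ≤
      (1/2) * (Matrix.trace ((Uᵀ * Y)ᵀ * (Uᵀ * Y)) + Matrix.trace ((V * Q)ᵀ * (V * Q))) := by
    rw [trace_transpose_mul', trace_transpose_mul', trace_transpose_mul']
    rw [← Finset.sum_add_distrib, Finset.mul_sum]
    refine Finset.sum_le_sum fun i _ => ?_
    rw [← Finset.sum_add_distrib, Finset.mul_sum]
    refine Finset.sum_le_sum fun j _ => ?_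
    nlinarith [sq_nonneg ((Uᵀ * Y) i j - (V * Q) i j)]
  have hB1tr : Matrix.trace ((Uᵀ * Y)ᵀ * (Uᵀ * Y)) = Matrix.trace (U * Uᵀ * P) := by
    have h1 : (Uᵀ * Y)ᵀ * (Uᵀ * Y) = Yᵀ * (U * (Uᵀ * Y)) := by
      rw [Matrix.transpose_mul, Matrix.transpose_transpose, Matrix.mul_assoc]
    rw [h1, Matrix.trace_mul_comm]
    congr 1
    rw [hP]
    simp only [Matrix.mul_assoc]
  have hPbound : Matrix.trace (U * Uᵀ * P) ≤ Matrix.trace (U * Uᵀ) := by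
    have hB : (0:ℝ) ≤ Matrix.trace (((1 - P) * U)ᵀ * ((1 - P) * U)) :=
      trace_transpose_mul_self_nonneg _
    have h1P : (1 - P) * (1 - P) = 1 - P := by
      rw [Matrix.sub_mul, Matrix.mul_sub, Matrix.mul_sub, hPP]
      simp
    have hT : ((1 - P) * U)ᵀ = Uᵀ * (1 - P) := by
      rw [Matrix.transpose_mul, Matrix.transpose_sub, Matrix.transpose_one, hPT]
    have h2 : Uᵀ * (1 - P) * ((1 - P) * U) = Uᵀ * U - Uᵀ * (P * U) := by
      rw [Matrix.mul_assoc, ← Matrix.mul_assoc (1 - P), h1P, Matrix.sub_mul,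
        Matrix.one_mul, Matrix.mul_sub]
    have h3 : Matrix.trace (Uᵀ * (P * U)) = Matrix.trace (U * Uᵀ * P) := by
      rw [Matrix.trace_mul_comm, Matrix.mul_assoc, Matrix.trace_mul_comm, Matrix.mul_assoc]
    rw [hT, h2, Matrix.trace_sub, h3] at hB
    have hUU : Matrix.trace (Uᵀ * U) = Matrix.trace (U * Uᵀ) := Matrix.trace_mul_comm _ _
    linarith [hB, hUU]
  have hB2tr : Matrix.trace ((V * Q)ᵀ * (V * Q)) = Matrix.trace (Vᵀ * V) := by
    have h1 : (V * Q)ᵀ * (V * Q) = Qᵀ * (Vᵀ * (V * Q)) := by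
      rw [Matrix.transpose_mul, Matrix.mul_assoc]
    rw [h1, Matrix.trace_mul_comm]
    have h2 : Vᵀ * (V * Q) * Qᵀ = Vᵀ * V := by
      rw [Matrix.mul_assoc, Matrix.mul_assoc, hQ1', Matrix.mul_one]
    rw [h2]
  have hUU : Matrix.trace (U * Uᵀ) = Matrix.trace (Uᵀ * U) := Matrix.trace_mul_comm _ _
  calc ∑ i, μ i = Matrix.trace ((Uᵀ * Y)ᵀ * (V * Q)) := by rw [hstepA, hmain]
    _ ≤ (1/2) * (Matrix.trace ((Uᵀ * Y)ᵀ * (Uᵀ * Y)) + Matrix.trace ((V * Q)ᵀ * (V * Q))) :=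
        hineq
    _ ≤ (1/2) * (Matrix.trace (Uᵀ * U) + Matrix.trace (Vᵀ * V)) := by
        rw [hB1tr, hB2tr]
        have := hPbound
        rw [hUU] at this
        linarith

theorem trace_norm_le_half_frobenius_sq {m n r : ℕ} (W : Matrix (Fin m) (Fin n) ℝ)
    (U : Matrix (Fin m) (Fin r) ℝ) (V : Matrix (Fin r) (Fin n) ℝ) (hW : W = U * V) :
    traceNorm W ≤ (1 / 2) * (frobeniusNorm U ^ 2 + frobeniusNorm V ^ 2) := by
  classical
  have hA := Matrix.isHermitian_conjTranspose_mul_self W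
  have hlam0 : ∀ i, 0 ≤ hA.eigenvalues i :=
    Matrix.eigenvalues_conjTranspose_mul_self_nonneg W
  have hQT : star (hA.eigenvectorUnitary : Matrix (Fin n) (Fin n) ℝ)
      = (hA.eigenvectorUnitary : Matrix (Fin n) (Fin n) ℝ)ᵀ := by
    ext i j; simp [Matrix.star_apply]
  have hQ1' : (hA.eigenvectorUnitary : Matrix (Fin n) (Fin n) ℝ)
      * (hA.eigenvectorUnitary : Matrix (Fin n) (Fin n) ℝ)ᵀ = 1 := by
    rw [← hQT]; exact hA.eigenvectorUnitary.2.2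
  have hs : star (hA.eigenvectorUnitary : Matrix (Fin n) (Fin n) ℝ) * (Wᴴ * W)
      * (hA.eigenvectorUnitary : Matrix (Fin n) (Fin n) ℝ)
      = Matrix.diagonal (RCLike.ofReal ∘ hA.eigenvalues) := by
    have := hA.conjStarAlgAut_star_eigenvectorUnitary
    rw [Unitary.conjStarAlgAut_apply, Unitary.coe_star, star_star] at this
    exact this
  rw [hQT] at hs
  have hdiag : (W * (hA.eigenvectorUnitary : Matrix (Fin n) (Fin n) ℝ))ᵀ
      * (W * (hA.eigenvectorUnitary : Matrix (Fin n) (Fin n) ℝ))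
      = Matrix.diagonal hA.eigenvalues := by
    have hWH : Wᴴ = Wᵀ := by ext i j; simp
    have h2 : (W * (hA.eigenvectorUnitary : Matrix (Fin n) (Fin n) ℝ))ᵀ
        * (W * (hA.eigenvectorUnitary : Matrix (Fin n) (Fin n) ℝ))
        = (hA.eigenvectorUnitary : Matrix (Fin n) (Fin n) ℝ)ᵀ * (Wᴴ * W)
          * (hA.eigenvectorUnitary : Matrix (Fin n) (Fin n) ℝ) := by
      rw [Matrix.transpose_mul, ← hWH]
      simp only [Matrix.mul_assoc]
    rw [h2, hs]; congr 1
  have key := aux_trace_bound W U V (hA.eigenvectorUnitary : Matrix (Fin n) (Fin n) ℝ)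
    hA.eigenvalues (singularValuesFull W) hW hQ1' hdiag hlam0 (fun i => rfl)
  have hfU : frobeniusNorm U ^ 2 = Matrix.trace (Uᵀ * U) := by
    rw [frobeniusNorm, Real.sq_sqrt (by positivity), fsq_eq_trace]
  have hfV : frobeniusNorm V ^ 2 = Matrix.trace (Vᵀ * V) := by
    rw [frobeniusNorm, Real.sq_sqrt (by positivity), fsq_eq_trace]
  rw [traceNorm, hfU, hfV]
  exact key
end

section
/- Let W be an m × n real matrix and let r ≥ min(m,n). Then the infimum over all factorizations W = U·V with U of size m × r and V of size r × n of the quantity (1/2)(‖U‖_F² + ‖V‖_F²) equals ‖W‖_T, and this infimum is attained. -/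
open Matrix BigOperators

lemma sum_sq_eq_trace {a b : ℕ} (A : Matrix (Fin a) (Fin b) ℝ) :
    (∑ i, ∑ j, A i j ^ 2) = (Aᵀ * A).trace := by
  rw [Matrix.trace, Finset.sum_comm]
  simp [Matrix.mul_apply, Matrix.diag, pow_two]

lemma frob_sq {a b : ℕ} (A : Matrix (Fin a) (Fin b) ℝ) :
    frobeniusNorm A ^ 2 = (Aᵀ * A).trace := by
  rw [frobeniusNorm, Real.sq_sqrt (by positivity), sum_sq_eq_trace]

lemma col_zero {a b : ℕ} (A : Matrix (Fin a) (Fin b) ℝ) (d : Fin b → ℝ)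
    (h : Aᵀ * A = Matrix.diagonal d) {j : Fin b} (hj : d j = 0) (i : Fin a) : A i j = 0 := by
  have h2 : (Aᵀ * A) j j = d j := by rw [h]; simp
  rw [Matrix.mul_apply] at h2
  simp only [Matrix.transpose_apply, hj] at h2
  have hz : ∑ i, A i j ^ 2 = 0 := by rw [← h2]; exact Finset.sum_congr rfl (by intros; ring)
  have := (Finset.sum_eq_zero_iff_of_nonneg (fun i _ => sq_nonneg (A i j))).mp hz i (Finset.mem_univ i)
  exact pow_eq_zero_iff (by norm_num) |>.mp this

lemma traceConjAux {a b c : ℕ} (B : Matrix (Fin a) (Fin b) ℝ) (P : Matrix (Fin b) (Fin c) ℝ) :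
    ((B * P)ᵀ * (B * P)).trace = (Bᵀ * B * (P * Pᵀ)).trace := by
  rw [Matrix.transpose_mul, Matrix.mul_assoc, ← Matrix.mul_assoc Bᵀ B P,
    Matrix.trace_mul_comm, Matrix.mul_assoc]

lemma real_alg1 {x : ℝ} (hx : 0 ≤ x) (hx0 : x ≠ 0) :
    (Real.sqrt (Real.sqrt x))⁻¹ * (x * (Real.sqrt (Real.sqrt x))⁻¹) = Real.sqrt x := by
  have hs : 0 < Real.sqrt x := Real.sqrt_pos.mpr (lt_of_le_of_ne hx (Ne.symm hx0))
  have ht : 0 < Real.sqrt (Real.sqrt x) := Real.sqrt_pos.mpr hs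
  have htt : Real.sqrt (Real.sqrt x) * Real.sqrt (Real.sqrt x) = Real.sqrt x :=
    Real.mul_self_sqrt hs.le
  have hss : Real.sqrt x * Real.sqrt x = x := Real.mul_self_sqrt hx
  field_simp
  rw [sq, htt, hss]

lemma real_alg2 {x : ℝ} (hx : 0 ≤ x) (hx0 : x ≠ 0) :
    (Real.sqrt (Real.sqrt x))⁻¹ * Real.sqrt (Real.sqrt x) = 1 := by
  have hs : 0 < Real.sqrt x := Real.sqrt_pos.mpr (lt_of_le_of_ne hx (Ne.symm hx0))
  have ht : 0 < Real.sqrt (Real.sqrt x) := Real.sqrt_pos.mpr hs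
  field_simp

lemma aux_mem {m n r : ℕ} (W : Matrix (Fin m) (Fin n) ℝ) (Q : Matrix (Fin n) (Fin n) ℝ)
    (lam : Fin n → ℝ) (hlam : ∀ i, 0 ≤ lam i)
    (hQ2 : Q * Qᵀ = 1)
    (hdiag : (W * Q)ᵀ * (W * Q) = Matrix.diagonal lam)
    (hcard : Fintype.card {i // lam i ≠ 0} ≤ r) :
    ∃ (U : Matrix (Fin m) (Fin r) ℝ) (V : Matrix (Fin r) (Fin n) ℝ),
      W = U * V ∧ frobeniusNorm U ^ 2 = ∑ i, Real.sqrt (lam i) ∧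
      frobeniusNorm V ^ 2 = ∑ i, Real.sqrt (lam i) := by
  classical
  have hQ1 : Qᵀ * Q = 1 := mul_eq_one_comm.mp hQ2
  obtain ⟨ψ⟩ : Nonempty ({i // lam i ≠ 0} ↪ Fin r) :=
    Function.Embedding.nonempty_of_card_le (by simpa using hcard)
  set e : Fin n → ℝ := fun j => if lam j = 0 then 0 else 1 with he
  set f : Fin n → ℝ := fun j => if lam j = 0 then 0 else (Real.sqrt (Real.sqrt (lam j)))⁻¹ with hf
  set g : Fin n → ℝ := fun j => Real.sqrt (Real.sqrt (lam j)) with hg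
  set P : Matrix (Fin n) (Fin r) ℝ :=
    Matrix.of fun j k => if h : lam j ≠ 0 then (if ψ ⟨j, h⟩ = k then (1:ℝ) else 0) else 0 with hP
  have hPPt : P * Pᵀ = Matrix.diagonal e := by
    ext j j'
    rw [Matrix.mul_apply, Matrix.diagonal_apply]
    by_cases h : lam j = 0
    · have h1 : ∀ k, P j k = 0 := fun k => by simp [hP, h]
      have h2 : e j = 0 := if_pos h
      simp only [h1, zero_mul, Finset.sum_const_zero, h2, ite_self]
    · by_cases h' : lam j' = 0
      · have h1 : ∀ k, P j' k = 0 := fun k => by simp [hP, h']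
        have h3 : j ≠ j' := fun hc => h (hc ▸ h')
        simp only [Matrix.transpose_apply, h1, mul_zero, Finset.sum_const_zero, if_neg h3]
      · have h1 : ∀ k, P j k * Pᵀ k j' =
            if ψ ⟨j, h⟩ = k ∧ ψ ⟨j', h'⟩ = k then (1:ℝ) else 0 := by
          intro k
          simp only [hP, Matrix.of_apply, Matrix.transpose_apply, dif_pos h, dif_pos h']
          by_cases ha : ψ ⟨j, h⟩ = k <;> by_cases hb : ψ ⟨j', h'⟩ = k <;> simp [ha, hb]
        rw [Finset.sum_congr rfl fun k _ => h1 k]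
        by_cases hjj' : j = j'
        · subst hjj'
          simp only [and_self]
          rw [Finset.sum_ite_eq]
          simp [he, h]
        · have hne : ψ ⟨j, h⟩ ≠ ψ ⟨j', h'⟩ := fun hc =>
            hjj' (congrArg Subtype.val (ψ.injective hc))
          rw [if_neg hjj', Finset.sum_eq_zero]
          intro k _
          rw [if_neg]
          rintro ⟨ha, hb⟩
          exact hne (ha.trans hb.symm)
  refine ⟨W * Q * Matrix.diagonal f * P, Pᵀ * (Matrix.diagonal g * Qᵀ), ?_, ?_, ?_⟩
  · -- W = U * V
    have hfg : Matrix.diagonal f * Matrix.diagonal e * Matrix.diagonal g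
        = Matrix.diagonal e := by
      rw [Matrix.diagonal_mul_diagonal, Matrix.diagonal_mul_diagonal,
        Matrix.diagonal_eq_diagonal_iff]
      intro j
      by_cases h : lam j = 0
      · simp [hf, he, h]
      · simp only [hf, he, hg, if_neg h, mul_one]
        exact real_alg2 (hlam j) h
    have hWQe : W * Q * Matrix.diagonal e = W * Q := by
      ext i j
      rw [Matrix.mul_diagonal]
      by_cases h : lam j = 0
      · rw [col_zero (W * Q) lam hdiag h i]; ring
      · simp [he, h]
    calc W = W * Q * Qᵀ := by rw [Matrix.mul_assoc, hQ2, Matrix.mul_one]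
      _ = W * Q * Matrix.diagonal e * Qᵀ := by rw [hWQe]
      _ = W * Q * (Matrix.diagonal f * (P * Pᵀ) * Matrix.diagonal g) * Qᵀ := by
          rw [hPPt, hfg]
      _ = W * Q * Matrix.diagonal f * P * (Pᵀ * (Matrix.diagonal g * Qᵀ)) := by
          simp only [Matrix.mul_assoc]
  · -- frob U
    have hBtB : ((W * Q) * Matrix.diagonal f)ᵀ * ((W * Q) * Matrix.diagonal f)
        = Matrix.diagonal (fun j => f j * (lam j * f j)) := by
      rw [Matrix.transpose_mul, Matrix.diagonal_transpose, Matrix.mul_assoc,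
        ← Matrix.mul_assoc (W * Q)ᵀ, hdiag, Matrix.diagonal_mul_diagonal,
        Matrix.diagonal_mul_diagonal]
    rw [frob_sq, traceConjAux, hBtB, hPPt, Matrix.diagonal_mul_diagonal,
      Matrix.trace_diagonal]
    apply Finset.sum_congr rfl
    intro j _
    by_cases h : lam j = 0
    · simp [hf, he, h]
    · simp only [hf, he, if_neg h, mul_one]
      exact real_alg1 (hlam j) h
  · -- frob V
    have hKtK : (Q * Matrix.diagonal g)ᵀ * (Q * Matrix.diagonal g)
        = Matrix.diagonal (fun j => g j * g j) := by
      rw [Matrix.transpose_mul, Matrix.diagonal_transpose, Matrix.mul_assoc,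
        ← Matrix.mul_assoc Qᵀ Q, hQ1, Matrix.one_mul, Matrix.diagonal_mul_diagonal]
    have hVform : (Pᵀ * (Matrix.diagonal g * Qᵀ)) = ((Q * Matrix.diagonal g) * P)ᵀ := by
      simp [Matrix.transpose_mul, Matrix.diagonal_transpose, Matrix.mul_assoc]
    rw [frob_sq, hVform, Matrix.transpose_transpose, Matrix.trace_mul_comm, traceConjAux,
      hKtK, hPPt, Matrix.diagonal_mul_diagonal, Matrix.trace_diagonal]
    apply Finset.sum_congr rfl
    intro j _
    by_cases h : lam j = 0
    · simp [he, h]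
    · simp only [he, hg, if_neg h, mul_one]
      exact Real.mul_self_sqrt (Real.sqrt_nonneg _)

lemma trace_amgm {a b : ℕ} (A B : Matrix (Fin a) (Fin b) ℝ) :
    (Aᵀ * B).trace ≤ (1/2) * ((Aᵀ * A).trace + (Bᵀ * B).trace) := by
  rw [← sum_sq_eq_trace, ← sum_sq_eq_trace]
  have h : (Aᵀ * B).trace = ∑ i, ∑ j, A i j * B i j := by
    rw [Matrix.trace, Finset.sum_comm]
    simp [Matrix.mul_apply, Matrix.diag]
  rw [h, ← Finset.sum_add_distrib, Finset.mul_sum]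
  apply Finset.sum_le_sum; intro i _
  rw [← Finset.sum_add_distrib, Finset.mul_sum]
  apply Finset.sum_le_sum; intro j _
  nlinarith [sq_nonneg (A i j - B i j)]

lemma trace_psd {a c : ℕ} (U : Matrix (Fin a) (Fin c) ℝ) (N : Matrix (Fin a) (Fin a) ℝ)
    (hsym : Nᵀ = N) (hidem : N * N = N) : 0 ≤ (U * Uᵀ * N).trace := by
  have key : (U * Uᵀ * N).trace = ((N * U)ᵀ * (N * U)).trace := by
    calc (U * Uᵀ * N).trace
        = (N * (U * Uᵀ)).trace := Matrix.trace_mul_comm _ _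
      _ = ((N * U) * Uᵀ).trace := by simp only [Matrix.mul_assoc]
      _ = (Uᵀ * (N * U)).trace := Matrix.trace_mul_comm _ _
      _ = (Uᵀ * (N * (N * U))).trace := by rw [← Matrix.mul_assoc N N U, hidem]
      _ = ((Uᵀ * Nᵀ) * (N * U)).trace := by rw [hsym]; simp only [Matrix.mul_assoc]
      _ = ((N * U)ᵀ * (N * U)).trace := by rw [Matrix.transpose_mul]
  rw [key, ← sum_sq_eq_trace]
  positivity

lemma trace_contract {a c : ℕ} (U : Matrix (Fin a) (Fin c) ℝ) (Mm : Matrix (Fin a) (Fin a) ℝ)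
    (hsym : Mmᵀ = Mm) (hidem : Mm * Mm = Mm) :
    (U * Uᵀ * Mm).trace ≤ (U * Uᵀ).trace := by
  have hNsym : (1 - Mm)ᵀ = 1 - Mm := by
    rw [Matrix.transpose_sub, Matrix.transpose_one, hsym]
  have hNidem : (1 - Mm) * (1 - Mm) = 1 - Mm := by
    have expand : (1 - Mm) * (1 - Mm) = 1 - Mm - Mm + Mm * Mm := by noncomm_ring
    rw [expand, hidem]; abel
  have hpos : 0 ≤ (U * Uᵀ * (1 - Mm)).trace := trace_psd U (1 - Mm) hNsym hNidem
  have hsplit : (U * Uᵀ * (1 - Mm)).trace = (U * Uᵀ).trace - (U * Uᵀ * Mm).trace := by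
    rw [Matrix.mul_sub, Matrix.mul_one, Matrix.trace_sub]
  linarith

lemma aux_lb {m n r : ℕ} (W : Matrix (Fin m) (Fin n) ℝ) (Q : Matrix (Fin n) (Fin n) ℝ)
    (lam : Fin n → ℝ) (hlam : ∀ i, 0 ≤ lam i)
    (hQ2 : Q * Qᵀ = 1)
    (hdiag : (W * Q)ᵀ * (W * Q) = Matrix.diagonal lam)
    (U : Matrix (Fin m) (Fin r) ℝ) (V : Matrix (Fin r) (Fin n) ℝ) (hW : W = U * V) :
    ∑ i, Real.sqrt (lam i) ≤ (1/2) * (frobeniusNorm U ^ 2 + frobeniusNorm V ^ 2) := by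
  classical
  set e : Fin n → ℝ := fun j => if lam j = 0 then 0 else 1 with he
  set f : Fin n → ℝ := fun j => if lam j = 0 then 0 else (Real.sqrt (lam j))⁻¹ with hf
  set M : Matrix (Fin m) (Fin n) ℝ := W * Q * Matrix.diagonal f with hM
  have hMtM : Mᵀ * M = Matrix.diagonal e := by
    rw [hM, Matrix.transpose_mul, Matrix.diagonal_transpose, Matrix.mul_assoc,
      ← Matrix.mul_assoc (W * Q)ᵀ, hdiag, Matrix.diagonal_mul_diagonal,
      Matrix.diagonal_mul_diagonal, Matrix.diagonal_eq_diagonal_iff]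
    intro j
    by_cases h : lam j = 0
    · simp [hf, he, h]
    · have hs : 0 < Real.sqrt (lam j) :=
        Real.sqrt_pos.mpr (lt_of_le_of_ne (hlam j) (Ne.symm h))
      have hss : Real.sqrt (lam j) * Real.sqrt (lam j) = lam j :=
        Real.mul_self_sqrt (hlam j)
      simp only [hf, he, if_neg h]
      field_simp
      rw [sq, hss]
  -- step 1 : trace (Mᵀ * (W * Q)) = ∑ √λ
  have step1 : (Mᵀ * (W * Q)).trace = ∑ i, Real.sqrt (lam i) := by
    have hform : Mᵀ * (W * Q) = Matrix.diagonal (fun j => f j * lam j) := by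
      rw [hM, Matrix.transpose_mul, Matrix.diagonal_transpose, Matrix.mul_assoc, hdiag,
        Matrix.diagonal_mul_diagonal]
    rw [hform, Matrix.trace_diagonal]
    apply Finset.sum_congr rfl
    intro j _
    by_cases h : lam j = 0
    · simp [hf, h]
    · have hss : Real.sqrt (lam j) * Real.sqrt (lam j) = lam j :=
        Real.mul_self_sqrt (hlam j)
      have hs : Real.sqrt (lam j) ≠ 0 := by
        simp only [ne_eq, Real.sqrt_eq_zero (hlam j)]; exact h
      simp only [hf, if_neg h]
      field_simp
      rw [sq, hss]
  -- step 2 : rewrite with W = U * V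
  have step2 : Mᵀ * (W * Q) = (Uᵀ * M)ᵀ * (V * Q) := by
    conv_rhs => rw [Matrix.transpose_mul, Matrix.transpose_transpose]
    rw [hW]
    simp only [Matrix.mul_assoc]
  -- step 5 : (V*Q) term
  have step5 : ((V * Q)ᵀ * (V * Q)).trace = (Vᵀ * V).trace := by
    rw [traceConjAux, hQ2, Matrix.mul_one]
  -- step 4 : (Uᵀ*M) term
  have hMe : M * Matrix.diagonal e = M := by
    ext i j
    rw [Matrix.mul_diagonal]
    by_cases h : lam j = 0
    · have hej : e j = 0 := if_pos h
      rw [col_zero M e hMtM hej i, hej]; ring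
    · simp [he, h]
  have hMMt : (M * Mᵀ) * (M * Mᵀ) = M * Mᵀ := by
    rw [Matrix.mul_assoc M Mᵀ (M * Mᵀ), ← Matrix.mul_assoc Mᵀ M Mᵀ, hMtM,
      ← Matrix.mul_assoc M, hMe]
  have hMsym : (M * Mᵀ)ᵀ = M * Mᵀ := by
    rw [Matrix.transpose_mul, Matrix.transpose_transpose]
  have step4 : ((Uᵀ * M)ᵀ * (Uᵀ * M)).trace ≤ (Uᵀ * U).trace := by
    rw [traceConjAux, Matrix.transpose_transpose, Matrix.trace_mul_comm Uᵀ U]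
    exact trace_contract U (M * Mᵀ) hMsym hMMt
  calc ∑ i, Real.sqrt (lam i) = (Mᵀ * (W * Q)).trace := step1.symm
    _ = ((Uᵀ * M)ᵀ * (V * Q)).trace := by rw [step2]
    _ ≤ (1/2) * (((Uᵀ * M)ᵀ * (Uᵀ * M)).trace + ((V * Q)ᵀ * (V * Q)).trace) :=
        trace_amgm _ _
    _ ≤ (1/2) * ((Uᵀ * U).trace + (Vᵀ * V).trace) := by
        rw [step5]; linarith [step4]
    _ = (1/2) * (frobeniusNorm U ^ 2 + frobeniusNorm V ^ 2) := by
        rw [frob_sq, frob_sq]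

theorem trace_norm_is_least_over_rank_r_factorizations {m n r : ℕ}
    (hr : min m n ≤ r) (W : Matrix (Fin m) (Fin n) ℝ) :
    IsLeast {x : ℝ | ∃ (U : Matrix (Fin m) (Fin r) ℝ)
        (V : Matrix (Fin r) (Fin n) ℝ), W = U * V ∧
        x = (1 / 2) * (frobeniusNorm U ^ 2 + frobeniusNorm V ^ 2)}
      (traceNorm W) := by
  classical
  have hH := Matrix.isHermitian_conjTranspose_mul_self W
  set lam : Fin n → ℝ := hH.eigenvalues with hlamdef
  set Q : Matrix (Fin n) (Fin n) ℝ := ↑(Matrix.IsHermitian.eigenvectorUnitary hH) with hQdef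
  have hlam : ∀ i, 0 ≤ lam i := Matrix.eigenvalues_conjTranspose_mul_self_nonneg W
  have hstar : star Q = Qᵀ := by
    rw [Matrix.star_eq_conjTranspose, Matrix.conjTranspose_eq_transpose_of_trivial]
  have hQ2 : Q * Qᵀ = 1 := by
    rw [← hstar]
    exact (Unitary.mem_iff.mp (Matrix.IsHermitian.eigenvectorUnitary hH).prop).2
  have hQ1 : Qᵀ * Q = 1 := mul_eq_one_comm.mp hQ2
  have hspec : Wᴴ * W = Q * Matrix.diagonal lam * Qᵀ := by
    have h := hH.spectral_theorem
    rw [RCLike.ofReal_real_eq_id] at h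
    simp only [Function.id_comp] at h
    rw [h, Unitary.conjStarAlgAut_apply, hstar]
  have hdiag : (W * Q)ᵀ * (W * Q) = Matrix.diagonal lam := by
    have h1 : Wᵀ * W = Q * Matrix.diagonal lam * Qᵀ := by
      rw [← Matrix.conjTranspose_eq_transpose_of_trivial]; exact hspec
    calc (W * Q)ᵀ * (W * Q) = Qᵀ * (Wᵀ * W * Q) := by
          rw [Matrix.transpose_mul]; simp only [Matrix.mul_assoc]
      _ = Qᵀ * (Q * Matrix.diagonal lam * Qᵀ * Q) := by rw [h1]
      _ = (Qᵀ * Q) * Matrix.diagonal lam * (Qᵀ * Q) := by simp only [Matrix.mul_assoc]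
      _ = Matrix.diagonal lam := by rw [hQ1, Matrix.one_mul, Matrix.mul_one]
  have hcard : Fintype.card {i // lam i ≠ 0} ≤ r := by
    have h1 : (Wᴴ * W).rank = Fintype.card {i // lam i ≠ 0} := hH.rank_eq_card_non_zero_eigs
    have h2 : (Wᴴ * W).rank = W.rank := by
      rw [Matrix.conjTranspose_eq_transpose_of_trivial, Matrix.rank_transpose_mul_self]
    have h3 : W.rank ≤ m := Matrix.rank_le_height W
    have h4 : W.rank ≤ n := Matrix.rank_le_width W
    omega
  have htrace : traceNorm W = ∑ i, Real.sqrt (lam i) := rfl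
  constructor
  · obtain ⟨U, V, h1, h2, h3⟩ := aux_mem W Q lam hlam hQ2 hdiag hcard
    exact ⟨U, V, h1, by rw [htrace, h2, h3]; ring⟩
  · rintro x ⟨U, V, hUV, hx⟩
    rw [htrace, hx]
    exact aux_lb W Q lam hlam hQ2 hdiag U V hUV
end
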